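/- (WPD for rank-one elements.) Let X be a uniformly locally finite CAT(0) cube complex on which a group G acts metrically properly by isometries, and let h ∈ G act loxodromically on the contact graph 𝒞X (i.e., h has a quasigeodesic axis in 𝒞X). Then h is a WPD element for the G-action on 𝒞X: for all ε ≥ 1 and every hyperplane H, there exists N > 0 such that the set of g ∈ G with d_{𝒞X}(H, gH) < ε and d_{𝒞X}(h^N H, g h^N H) < ε is finite. -/

import Mathlib

/-- A combinatorial model of a CAT(0) cube complex: its `0`--skeleton is a
median graph, encoded by its wallspace (hyperplanes and halfspaces), with
the graph metric on the `1`--skeleton equal to the wall-counting metric. -/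
structure CubeComplex where
  /-- vertices (`0`--cubes) -/
  V : Type
  /-- hyperplanes (walls) -/
  Wall : Type
  /-- halfspace membership: `side w x` means `x` is on the positive side of `w` -/
  side : Wall → V → Prop
  /-- graph metric on the `1`--skeleton -/
  d : V → V → ℕ
  sepFinite : ∀ x y : V, {w : Wall | ¬ (side w x ↔ side w y)}.Finite
  d_eq : ∀ x y : V, d x y = {w : Wall | ¬ (side w x ↔ side w y)}.ncard
  /-- every hyperplane is dual to some `1`--cube -/
  wall_dual : ∀ w : Wall, ∃ x y : V, d x y = 1 ∧ ¬ (side w x ↔ side w y)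
  /-- the median operation of the underlying median graph -/
  median : V → V → V → V
  median_xy : ∀ x y z, d x (median x y z) + d (median x y z) y = d x y
  median_yz : ∀ x y z, d y (median x y z) + d (median x y z) z = d y z
  median_xz : ∀ x y z, d x (median x y z) + d (median x y z) z = d x z

namespace CubeComplex

variable (X : CubeComplex)

/-- the hyperplane `w` separates `x` from `y` -/
def Sep (w : X.Wall) (x y : X.V) : Prop := ¬ (X.side w x ↔ X.side w y)

/-- the hyperplane `w` separates `x` from the set `K` -/
def SepFrom (w : X.Wall) (x : X.V) (K : Set X.V) : Prop := ∀ k ∈ K, X.Sep w x k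

/-- `z` lies on a geodesic from `x` to `y` -/
def Btw (x z y : X.V) : Prop := X.d x z + X.d z y = X.d x y

/-- a convex (interval-closed, equivalently geodesically convex) subset -/
def IsConvex (K : Set X.V) : Prop := ∀ a ∈ K, ∀ b ∈ K, ∀ z, X.Btw a z b → z ∈ K

/-- the hyperplane `w` crosses the set `K` -/
def Crosses (w : X.Wall) (K : Set X.V) : Prop := ∃ a ∈ K, ∃ b ∈ K, X.Sep w a b

/-- two subcomplexes are parallel if exactly the same hyperplanes cross them -/
def ParallelSet (K K' : Set X.V) : Prop := ∀ w : X.Wall, X.Crosses w K ↔ X.Crosses w K'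

/-- the vertex set of the carrier `N(w)` of the hyperplane `w` -/
def carrier (w : X.Wall) : Set X.V := {x | ∃ y, X.d x y = 1 ∧ X.Sep w x y}

end CubeComplex

/-- A convex subcomplex of a CAT(0) cube complex, together with its gate
(closest-point projection) map, characterized by the property that a
hyperplane separates `x` from `gate x` iff it separates `x` from the
subcomplex. -/
structure ConvexSub (X : CubeComplex) where
  carrier : Set X.V
  nonempty : carrier.Nonempty
  convex : X.IsConvex carrier
  gate : X.V → X.V
  gate_mem : ∀ x, gate x ∈ carrier
  gate_idem : ∀ x ∈ carrier, gate x = x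
  gate_sep : ∀ x w, X.Sep w x (gate x) ↔ X.SepFrom w x carrier

/-- the contact graph of a CAT(0) cube complex: vertices are hyperplanes, two
hyperplanes are adjacent iff their carriers intersect (cross or osculate) -/
def CubeComplex.contactGraph (X : CubeComplex) : SimpleGraph X.Wall where
  Adj w w' := w ≠ w' ∧ (X.carrier w ∩ X.carrier w').Nonempty
  symm := ⟨by
    rintro w w' ⟨hne, x, hx1, hx2⟩
    exact ⟨Ne.symm hne, x, hx2, hx1⟩⟩
  loopless := ⟨fun w h => h.1 rfl⟩

/-- the defining predicate of the geometric realization of the flag complex on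
a graph `G`: finitely supported convex coefficients whose support is a clique -/
def FlagPred {ι : Type} (G : SimpleGraph ι) (f : ι → ℝ) : Prop :=
  (∀ i, 0 ≤ f i) ∧ (Function.support f).Finite ∧ (∑ᶠ i, f i) = 1 ∧
    (Function.support f).Pairwise G.Adj

/-- the geometric realization of the flag simplicial complex whose 1-skeleton
is the graph `G` (the contact complex, when `G` is the contact graph) -/
def FlagRealization {ι : Type} (G : SimpleGraph ι) : Type :=
  {f : ι → ℝ // FlagPred G f}

instance {ι : Type} (G : SimpleGraph ι) : TopologicalSpace (FlagRealization G) :=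
  inferInstanceAs (TopologicalSpace {f : ι → ℝ // FlagPred G f})

/-- an action of a group `G` on a CAT(0) cube complex by cubical
automorphisms: `G` acts on the `0`--cubes by isometries and compatibly
permutes the hyperplanes. -/
structure CubeAction (X : CubeComplex) (G : Type) [Group G] where
  act : G → X.V → X.V
  wact : G → X.Wall → X.Wall
  act_one : ∀ x, act 1 x = x
  act_mul : ∀ g h x, act (g * h) x = act g (act h x)
  wact_one : ∀ w, wact 1 w = w
  wact_mul : ∀ g h w, wact (g * h) w = wact g (wact h w)
  isom : ∀ g x y, X.d (act g x) (act g y) = X.d x y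
  side_compat : ∀ g w x, X.side (wact g w) (act g x) ↔ X.side w x

/-- `X` is uniformly locally finite -/
def CubeComplex.UniformlyLocallyFinite (X : CubeComplex) : Prop :=
  ∀ r : ℕ, ∃ N : ℕ, ∀ x : X.V,
    {y : X.V | X.d x y ≤ r}.Finite ∧ {y : X.V | X.d x y ≤ r}.ncard ≤ N

namespace CubeComplex

variable {X : CubeComplex}

/-- the set of walls separating `x` from `y` -/
def sepSet (X : CubeComplex) (x y : X.V) : Set X.Wall := {w | X.Sep w x y}

lemma sepSet_finite (x y : X.V) : (X.sepSet x y).Finite := X.sepFinite x y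

lemma d_eq' (x y : X.V) : X.d x y = (X.sepSet x y).ncard := X.d_eq x y

lemma sep_comm {w : X.Wall} {x y : X.V} : X.Sep w x y ↔ X.Sep w y x := by
  unfold Sep; tauto

lemma sepSet_comm (x y : X.V) : X.sepSet x y = X.sepSet y x := by
  ext w; exact sep_comm

lemma d_comm (x y : X.V) : X.d x y = X.d y x := by
  rw [d_eq', d_eq', sepSet_comm]

lemma sepSet_self (x : X.V) : X.sepSet x x = ∅ := by
  ext w; simp [sepSet, Sep]

lemma d_self (x : X.V) : X.d x x = 0 := by
  rw [d_eq', sepSet_self]; simp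

lemma sep_triple {w : X.Wall} {x y z : X.V} (h : X.Sep w x z) :
    X.Sep w x y ∨ X.Sep w y z := by
  unfold Sep at *; tauto

lemma sepSet_triple (x y z : X.V) : X.sepSet x z ⊆ X.sepSet x y ∪ X.sepSet y z :=
  fun _ hw => sep_triple hw

lemma d_eq_zero_iff {x y : X.V} : X.d x y = 0 ↔ X.sepSet x y = ∅ := by
  rw [d_eq', Set.ncard_eq_zero (sepSet_finite x y)]

/-- key additivity: if `z` is between `x` and `y`, the walls separating `x,y`
are exactly those separating `x,z` together with those separating `z,y`,
disjointly. -/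
lemma btw_union {x z y : X.V} (h : X.Btw x z y) :
    X.sepSet x z ∪ X.sepSet z y = X.sepSet x y ∧
      X.sepSet x z ∩ X.sepSet z y = ∅ := by
  have hsub : X.sepSet x y ⊆ X.sepSet x z ∪ X.sepSet z y := sepSet_triple x z y
  have hfin1 := sepSet_finite (X := X) x z
  have hfin2 := sepSet_finite (X := X) z y
  have hfinu : (X.sepSet x z ∪ X.sepSet z y).Finite := hfin1.union hfin2
  have hcard : (X.sepSet x z ∪ X.sepSet z y).ncard + (X.sepSet x z ∩ X.sepSet z y).ncard
      = X.d x y := by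
    rw [Set.ncard_union_add_ncard_inter _ _ hfin1 hfin2, ← d_eq', ← d_eq', h]
  have hle : (X.sepSet x y).ncard ≤ (X.sepSet x z ∪ X.sepSet z y).ncard :=
    Set.ncard_le_ncard hsub hfinu
  rw [← d_eq'] at hle
  have heq : X.sepSet x y = X.sepSet x z ∪ X.sepSet z y :=
    Set.eq_of_subset_of_ncard_le hsub (by rw [d_eq' x y] at hcard; omega) hfinu
  have hint : (X.sepSet x z ∩ X.sepSet z y).ncard = 0 := by
    rw [← heq, d_eq' x y] at hcard; omega
  rw [Set.ncard_eq_zero (hfin1.inter_of_left _)] at hint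
  exact ⟨heq.symm, hint⟩

lemma btw_sep_left {x z y : X.V} (h : X.Btw x z y) : X.sepSet x z ⊆ X.sepSet x y := by
  rw [← (btw_union h).1]; exact Set.subset_union_left

lemma btw_sep_right {x z y : X.V} (h : X.Btw x z y) : X.sepSet z y ⊆ X.sepSet x y := by
  rw [← (btw_union h).1]; exact Set.subset_union_right

lemma btw_not_both {x z y : X.V} (h : X.Btw x z y) {w : X.Wall}
    (h1 : X.Sep w x z) (h2 : X.Sep w z y) : False := by
  have := (btw_union h).2
  have : w ∈ X.sepSet x z ∩ X.sepSet z y := ⟨h1, h2⟩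
  rw [(btw_union h).2] at this; exact this

lemma btw_symm {x z y : X.V} (h : X.Btw x z y) : X.Btw y z x := by
  unfold Btw at *
  rw [d_comm y z, d_comm z x, d_comm y x]; omega

lemma btw_self_left (x y : X.V) : X.Btw x x y := by
  unfold Btw; rw [d_self]; omega

lemma btw_self_right (x y : X.V) : X.Btw x y y := by
  unfold Btw; rw [d_self]; omega

/-- if `d x y = 1` and `w` separates `x,y` then `w` is the unique wall doing so -/
lemma sepSet_eq_singleton {x y : X.V} {w : X.Wall} (hd : X.d x y = 1)
    (hs : X.Sep w x y) : X.sepSet x y = {w} := by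
  rw [d_eq'] at hd
  obtain ⟨a, ha⟩ := Set.ncard_eq_one.mp hd
  have hw : w ∈ X.sepSet x y := hs
  rw [ha] at hw ⊢
  simp only [Set.mem_singleton_iff] at hw
  rw [hw]

section SepLogic

variable {w : X.Wall} {x y z : X.V}

lemma sep_resolve_left (h1 : X.Sep w x z) (h2 : ¬ X.Sep w x y) : X.Sep w y z := by
  unfold Sep at h1 h2 ⊢; tauto

lemma sep_resolve_right (h1 : X.Sep w x z) (h2 : ¬ X.Sep w y z) : X.Sep w x y := by
  unfold Sep at h1 h2 ⊢; tauto

lemma not_sep_trans (h1 : ¬ X.Sep w x y) (h2 : ¬ X.Sep w y z) : ¬ X.Sep w x z := by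
  unfold Sep at h1 h2 ⊢; tauto

lemma sep_sep_not (h1 : X.Sep w x z) (h2 : X.Sep w z y) : ¬ X.Sep w x y := by
  unfold Sep at h1 h2 ⊢; tauto

lemma sep_unique {a a' : X.V} {W w' : X.Wall} (hset : X.sepSet a a' = {W})
    (hne : w' ≠ W) : ¬ X.Sep w' a a' := fun hs => hne (by
  have hmem : w' ∈ X.sepSet a a' := hs
  rw [hset] at hmem
  exact hmem)

lemma sep_of_edge {a a' : X.V} {W : X.Wall} (hset : X.sepSet a a' = {W}) :
    X.Sep W a a' := by
  have hmem : W ∈ X.sepSet a a' := by rw [hset]; exact rfl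
  exact hmem

end SepLogic

/-- core interval lemma: a wall cannot separate `z` from both `x` and `y`
when `z` is between two points `a,b` which are between `x` and `y`. -/
lemma interval_core {x y a b z : X.V} (ha : X.Btw x a y) (hb : X.Btw x b y)
    (hz : X.Btw a z b) {w : X.Wall} (h1 : X.Sep w x z) (h2 : X.Sep w z y) : False := by
  have hxy : ¬ X.Sep w x y := sep_sep_not h1 h2
  have hsa : ¬ X.Sep w x a := fun hs => btw_not_both ha hs (sep_comm.mp (sep_resolve_left hs hxy))
  have hsb : ¬ X.Sep w x b := fun hs => btw_not_both hb hs (sep_comm.mp (sep_resolve_left hs hxy))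
  have hza : X.Sep w a z := sep_resolve_left h1 hsa
  have hzb : X.Sep w z b := by
    have hby : ¬ X.Sep w b y := not_sep_trans (fun hs => hsb (sep_comm.mp hs)) hxy
    exact sep_resolve_right h2 hby
  exact btw_not_both hz hza hzb

/-- intervals are convex -/
lemma interval_convex (x y : X.V) : X.IsConvex {z | X.Btw x z y} := by
  intro a ha b hb z hz
  have ha' : X.Btw x a y := ha
  have hb' : X.Btw x b y := hb
  have hsub1 : X.sepSet x z ⊆ X.sepSet x y := by
    intro w hw
    by_contra hxy
    have h1 : X.Sep w x z := hw
    exact interval_core ha' hb' hz h1 (sep_comm.mp (sep_resolve_left h1 hxy))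
  have hsub2 : X.sepSet z y ⊆ X.sepSet x y := by
    intro w hw
    by_contra hxy
    have h2 : X.Sep w z y := hw
    have hxy' : ¬ X.Sep w x y := hxy
    have h1 : X.Sep w x z := by unfold Sep at h2 hxy' ⊢; tauto
    exact interval_core ha' hb' hz h1 h2
  have hdisj : X.sepSet x z ∩ X.sepSet z y = ∅ := by
    ext w
    simp only [Set.mem_inter_iff, Set.mem_empty_iff_false, iff_false, not_and]
    intro h1 h2
    exact interval_core ha' hb' hz h1 h2
  have hunion : X.sepSet x z ∪ X.sepSet z y = X.sepSet x y :=
    Set.Subset.antisymm (Set.union_subset hsub1 hsub2) (sepSet_triple x z y)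
  show X.Btw x z y
  unfold Btw
  rw [d_eq' x z, d_eq' z y, d_eq' x y, ← hunion,
    Set.ncard_union_eq (Set.disjoint_iff_inter_eq_empty.mpr hdisj)
      (sepSet_finite x z) (sepSet_finite z y)]

lemma carrier_nonempty (w : X.Wall) : (X.carrier w).Nonempty := by
  obtain ⟨x, y, hd, hs⟩ := X.wall_dual w
  exact ⟨x, y, hd, hs⟩

/-- moving the endpoint of a betweenness relation across an edge on the near side -/
lemma btw_shift {a a' z b : X.V} {W : X.Wall} (hz : X.Btw a z b)
    (hset : X.sepSet a a' = {W}) (hW : X.Sep W a z) : X.Btw a' z b := by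
  have hWzb : ¬ X.Sep W z b := fun hs => btw_not_both hz hW hs
  have hWab : X.Sep W a b := by unfold Sep at hW hWzb ⊢; tauto
  have hWaa' : X.Sep W a a' := sep_of_edge hset
  have hWa'z : ¬ X.Sep W a' z := by unfold Sep at hWaa' hW ⊢; tauto
  have hWa'b : ¬ X.Sep W a' b := by unfold Sep at hWaa' hWab ⊢; tauto
  have e1 : X.sepSet a' z = X.sepSet a z \ {W} := by
    ext w'
    simp only [Set.mem_diff, Set.mem_singleton_iff]
    constructor
    · intro hw'
      have hw'' : X.Sep w' a' z := hw'
      constructor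
      · by_cases hne : w' = W
        · subst hne; exact absurd hw'' hWa'z
        · exact sep_resolve_left hw'' (fun hs => (sep_unique hset hne) (sep_comm.mp hs))
      · intro hc; subst hc; exact hWa'z hw''
    · rintro ⟨hw', hne⟩
      have hw'' : X.Sep w' a z := hw'
      exact sep_resolve_left hw'' (fun hs => (sep_unique hset hne) hs)
  have e2 : X.sepSet a' b = X.sepSet a b \ {W} := by
    ext w'
    simp only [Set.mem_diff, Set.mem_singleton_iff]
    constructor
    · intro hw'
      have hw'' : X.Sep w' a' b := hw'
      constructor
      · by_cases hne : w' = W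
        · subst hne; exact absurd hw'' hWa'b
        · exact sep_resolve_left hw'' (fun hs => (sep_unique hset hne) (sep_comm.mp hs))
      · intro hc; subst hc; exact hWa'b hw''
    · rintro ⟨hw', hne⟩
      have hw'' : X.Sep w' a b := hw'
      exact sep_resolve_left hw'' (fun hs => (sep_unique hset hne) hs)
  have hWin1 : W ∈ X.sepSet a z := hW
  have hWin2 : W ∈ X.sepSet a b := hWab
  have hd1 : X.d a' z = X.d a z - 1 := by
    rw [d_eq', d_eq', e1, Set.ncard_diff_singleton_of_mem hWin1]
  have hd2 : X.d a' b = X.d a b - 1 := by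
    rw [d_eq' a' b, d_eq' a b, e2, Set.ncard_diff_singleton_of_mem hWin2]
  have hpos1 : 1 ≤ X.d a z := by
    have : X.d a z ≠ 0 := by
      intro h0
      rw [d_eq_zero_iff] at h0
      rw [h0] at hWin1
      exact hWin1
    omega
  have hpos2 : 1 ≤ X.d a b := by
    have : X.d a b ≠ 0 := by
      intro h0
      rw [d_eq_zero_iff] at h0
      rw [h0] at hWin2
      exact hWin2
    omega
  have hz' : X.d a z + X.d z b = X.d a b := hz
  show X.d a' z + X.d z b = X.d a' b
  omega

/-- carriers of walls are convex -/
lemma carrier_convex (W : X.Wall) : X.IsConvex (X.carrier W) := by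
  have case1 : ∀ a b z : X.V, a ∈ X.carrier W → b ∈ X.carrier W → X.Btw a z b →
      ¬ X.Sep W a b → z ∈ X.carrier W := by
    intro a b z ha hb hz hsame
    obtain ⟨a', hda, hsa⟩ := ha
    obtain ⟨b', hdb, hsb⟩ := hb
    have hseta : X.sepSet a a' = {W} := sepSet_eq_singleton hda hsa
    have hsetb : X.sepSet b b' = {W} := sepSet_eq_singleton hdb hsb
    have h1 : X.Btw a' (X.median a' b' z) b' := X.median_xy a' b' z
    have h2 : X.Btw b' (X.median a' b' z) z := X.median_yz a' b' z
    have h3 : X.Btw a' (X.median a' b' z) z := X.median_xz a' b' z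
    set m := X.median a' b' z with hm
    have hWa'b' : ¬ X.Sep W a' b' := by
      unfold Sep at hsa hsb hsame ⊢; tauto
    have hWaz : ¬ X.Sep W a z := fun hs =>
      btw_not_both hz hs (by unfold Sep at hs hsame ⊢; tauto)
    have hWam : ¬ X.Sep W a' m := fun hs => btw_not_both h1 hs (by
      unfold Sep at hs hWa'b' ⊢; tauto)
    have hWzm : X.Sep W z m := by
      unfold Sep at hWam hsa hWaz ⊢; tauto
    have honly : X.sepSet z m = {W} := by
      apply Set.Subset.antisymm
      · intro w' hw'
        simp only [Set.mem_singleton_iff]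
        by_contra hne
        have hzm : X.Sep w' z m := hw'
        have hw'a'z : X.Sep w' a' z := btw_sep_right h3 (sep_comm.mp hzm)
        have hw'b'z : X.Sep w' b' z := btw_sep_right h2 (sep_comm.mp hzm)
        have hw'aa' : ¬ X.Sep w' a a' := sep_unique hseta hne
        have hw'bb' : ¬ X.Sep w' b b' := sep_unique hsetb hne
        have hsaz : X.Sep w' a z := by
          unfold Sep at hw'a'z hw'aa' ⊢; tauto
        have hszb : X.Sep w' z b := by
          unfold Sep at hw'b'z hw'bb' ⊢; tauto
        exact btw_not_both hz hsaz hszb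
      · intro w' hw'
        simp only [Set.mem_singleton_iff] at hw'
        subst hw'
        exact hWzm
    have hd1 : X.d z m = 1 := by
      rw [d_eq', honly, Set.ncard_singleton]
    exact ⟨m, hd1, hWzm⟩
  intro a ha b hb z hz
  by_cases hab : X.Sep W a b
  · by_cases haz : X.Sep W a z
    · -- z on b's side; replace a by a'
      obtain ⟨a', hda, hsa⟩ := ha
      have hseta : X.sepSet a a' = {W} := sepSet_eq_singleton hda hsa
      have ha' : a' ∈ X.carrier W := ⟨a, by rw [d_comm]; exact hda, sep_comm.mp hsa⟩
      have hbtw : X.Btw a' z b := btw_shift hz hseta haz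
      have hnsep : ¬ X.Sep W a' b := by
        unfold Sep at hsa hab ⊢; tauto
      exact case1 a' b z ha' hb hbtw hnsep
    · -- z on a's side; replace b by b'
      obtain ⟨b', hdb, hsb⟩ := hb
      have hsetb : X.sepSet b b' = {W} := sepSet_eq_singleton hdb hsb
      have hb' : b' ∈ X.carrier W := ⟨b, by rw [d_comm]; exact hdb, sep_comm.mp hsb⟩
      have hWbz : X.Sep W b z := by
        unfold Sep at hab haz ⊢; tauto
      have hbtw : X.Btw a z b' := btw_symm (btw_shift (btw_symm hz)
        (by rw [← sepSet_comm] at hsetb ⊢; exact hsetb) hWbz)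
      have hnsep : ¬ X.Sep W a b' := by
        unfold Sep at hsb hab ⊢; tauto
      exact case1 a b' z ha hb' hbtw hnsep
  · exact case1 a b z ha hb hz hab

/-- every nonempty convex set admits gates (closest-point projections),
characterized by the separation property -/
lemma exists_gate {C : Set X.V} (hC : X.IsConvex C) (hne : C.Nonempty) (x : X.V) :
    ∃ c ∈ C, ∀ w : X.Wall, X.Sep w x c ↔ X.SepFrom w x C := by
  classical
  set S : Set ℕ := {n | ∃ c ∈ C, X.d x c = n} with hS
  have hSne : S.Nonempty := ⟨X.d x hne.choose, hne.choose, hne.choose_spec, rfl⟩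
  obtain ⟨c, hcC, hcd⟩ := Nat.sInf_mem hSne
  refine ⟨c, hcC, fun w => ⟨fun hs k hk => ?_, fun hs => hs c hcC⟩⟩
  set m := X.median x c k with hm
  have h1 : X.Btw x m c := X.median_xy x c k
  have h2 : X.Btw c m k := X.median_yz x c k
  have h3 : X.Btw x m k := X.median_xz x c k
  have hmC : m ∈ C := hC c hcC k hk m h2
  have hmin : X.d x c ≤ X.d x m := by
    rw [hcd]
    exact Nat.sInf_le ⟨m, hmC, rfl⟩
  have hmc0 : X.d m c = 0 := by
    have hb := h1
    unfold Btw at hb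
    omega
  have hmcE : X.sepSet m c = ∅ := d_eq_zero_iff.mp hmc0
  have hxm : X.Sep w x m := by
    have hnmc : ¬ X.Sep w m c := by
      intro hc'
      have hmem : w ∈ X.sepSet m c := hc'
      rw [hmcE] at hmem
      exact hmem
    unfold Sep at hs hnmc ⊢; tauto
  exact btw_sep_left h3 hxm

/-- a wall crossing a nonempty convex set has a dual edge inside it -/
lemma dual_edge_in_convex {C : Set X.V} (hC : X.IsConvex C) {w : X.Wall}
    (hcr : X.Crosses w C) :
    ∃ p ∈ C, ∃ p' ∈ C, X.d p p' = 1 ∧ X.Sep w p p' := by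
  obtain ⟨a, haC, b, hbC, hab⟩ := hcr
  obtain ⟨u, u', hdu, hsu⟩ := X.wall_dual w
  have hne : C.Nonempty := ⟨a, haC⟩
  obtain ⟨p, hpC, hpg⟩ := exists_gate hC hne u
  obtain ⟨p', hp'C, hp'g⟩ := exists_gate hC hne u'
  have hsetu : X.sepSet u u' = {w} := sepSet_eq_singleton hdu hsu
  have hwp : ¬ X.Sep w u p := by
    intro hs
    have hfrom := (hpg w).mp hs
    have h1 : X.Sep w u a := hfrom a haC
    have h2 : X.Sep w u b := hfrom b hbC
    exact (by unfold Sep at h1 h2 ⊢; tauto : ¬ X.Sep w a b) hab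
  have hwp' : ¬ X.Sep w u' p' := by
    intro hs
    have hfrom := (hp'g w).mp hs
    have h1 : X.Sep w u' a := hfrom a haC
    have h2 : X.Sep w u' b := hfrom b hbC
    exact (by unfold Sep at h1 h2 ⊢; tauto : ¬ X.Sep w a b) hab
  have hwpp' : X.Sep w p p' := by
    unfold Sep at hwp hwp' ⊢; tauto
  have honly : X.sepSet p p' = {w} := by
    apply Set.Subset.antisymm
    · intro w' hw'
      simp only [Set.mem_singleton_iff]
      by_contra hne'
      have hspp' : X.Sep w' p p' := hw'
      have hnuu' : ¬ X.Sep w' u u' := sep_unique hsetu hne'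
      by_cases hup : X.Sep w' u p
      · have hup' : X.Sep w' u p' := (hpg w').mp hup p' hp'C
        exact (by unfold Sep at hup hup' ⊢; tauto : ¬ X.Sep w' p p') hspp'
      · have hup' : X.Sep w' u p' := by unfold Sep at hspp' hup ⊢; tauto
        have hu'p' : X.Sep w' u' p' := by unfold Sep at hup' hnuu' ⊢; tauto
        have hfrom := (hp'g w').mp hu'p'
        have hu'p : X.Sep w' u' p := hfrom p hpC
        have : X.Sep w' u p := by unfold Sep at hu'p hnuu' ⊢; tauto
        exact hup this
    · intro w' hw'
      simp only [Set.mem_singleton_iff] at hw'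
      subst hw'
      exact hwpp'
  refine ⟨p, hpC, p', hp'C, ?_, hwpp'⟩
  rw [d_eq', honly, Set.ncard_singleton]

/-- if a wall crosses the carrier of another wall, their carriers intersect -/
lemma carriers_meet_of_crosses {w W : X.Wall} (hcr : X.Crosses w (X.carrier W)) :
    (X.carrier w ∩ X.carrier W).Nonempty := by
  obtain ⟨p, hpC, p', hp'C, hd, hs⟩ := dual_edge_in_convex (carrier_convex W) hcr
  exact ⟨p, ⟨p', hd, hs⟩, hpC⟩

lemma mem_carrier_of_d_zero {x y : X.V} {w' : X.Wall} (h0 : X.d x y = 0)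
    (hy : y ∈ X.carrier w') : x ∈ X.carrier w' := by
  obtain ⟨y2, hdy, hsy⟩ := hy
  have hE : X.sepSet x y = ∅ := d_eq_zero_iff.mp h0
  have hsety : X.sepSet y y2 = {w'} := sepSet_eq_singleton hdy hsy
  have hset : X.sepSet x y2 = {w'} := by
    apply Set.Subset.antisymm
    · intro w'' hw''
      have hs'' : X.Sep w'' x y2 := hw''
      have hnxy : ¬ X.Sep w'' x y := by
        intro hc
        have hmem : w'' ∈ X.sepSet x y := hc
        rw [hE] at hmem
        exact hmem
      have : X.Sep w'' y y2 := by unfold Sep at hs'' hnxy ⊢; tauto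
      have hmem : w'' ∈ X.sepSet y y2 := this
      rw [hsety] at hmem
      exact hmem
    · intro w'' hw''
      simp only [Set.mem_singleton_iff] at hw''
      have hnxy : ¬ X.Sep w' x y := by
        intro hc
        have hmem : w' ∈ X.sepSet x y := hc
        rw [hE] at hmem
        exact hmem
      have hgoal : X.Sep w' x y2 := by
        unfold Sep at hsy hnxy ⊢; tauto
      show X.Sep w'' x y2
      rw [hw'']
      exact hgoal
  exact ⟨y2, by rw [d_eq', hset, Set.ncard_singleton], sep_of_edge hset⟩

lemma contact_reachable_aux : ∀ n : ℕ, ∀ x y : X.V, X.d x y ≤ n →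
    ∀ w w' : X.Wall, x ∈ X.carrier w → y ∈ X.carrier w' →
    X.contactGraph.Reachable w w' := by
  intro n
  induction n with
  | zero =>
    intro x y hd w w' hxw hyw'
    have hx' : x ∈ X.carrier w' := mem_carrier_of_d_zero (Nat.le_zero.mp hd) hyw'
    by_cases hww' : w = w'
    · subst hww'; rfl
    · exact SimpleGraph.Adj.reachable ⟨hww', x, hxw, hx'⟩
  | succ n ih =>
    intro x y hd w w' hxw hyw'
    by_cases hdn : X.d x y ≤ n
    · exact ih x y hdn w w' hxw hyw'
    · have hdeq : X.d x y = n + 1 := by omega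
      have hne0 : (X.sepSet x y).ncard ≠ 0 := by rw [← d_eq', hdeq]; omega
      obtain ⟨v, hv⟩ := Set.nonempty_of_ncard_ne_zero hne0
      have hvxy : X.Sep v x y := hv
      have hcr : X.Crosses v {z | X.Btw x z y} :=
        ⟨x, btw_self_left x y, y, btw_self_right x y, hvxy⟩
      obtain ⟨p, hpI, p', hp'I, hdpp', hspp'⟩ :=
        dual_edge_in_convex (interval_convex x y) hcr
      have hsetpp' : X.sepSet p p' = {v} := sepSet_eq_singleton hdpp' hspp'
      have key : ∀ q q' : X.V, X.Btw x q y → X.Btw x q' y → X.sepSet q q' = {v} →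
          ¬ X.Sep v x q → X.contactGraph.Reachable w w' := by
        intro q q' hqI hq'I hset hnxq
        have hsqq' : X.Sep v q q' := sep_of_edge hset
        have hqy : X.Sep v q y := by unfold Sep at hvxy hnxq ⊢; tauto
        have hxq' : X.Sep v x q' := by unfold Sep at hnxq hsqq' ⊢; tauto
        have hq1 : X.d x q ≤ n := by
          have hb : X.d x q + X.d q y = X.d x y := hqI
          have : X.d q y ≠ 0 := by
            intro h0
            have hmem : v ∈ X.sepSet q y := hqy
            rw [d_eq_zero_iff.mp h0] at hmem
            exact hmem
          omega
        have hq2 : X.d q' y ≤ n := by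
          have hb : X.d x q' + X.d q' y = X.d x y := hq'I
          have : X.d x q' ≠ 0 := by
            intro h0
            have hmem : v ∈ X.sepSet x q' := hxq'
            rw [d_eq_zero_iff.mp h0] at hmem
            exact hmem
          omega
        have hqcar : q ∈ X.carrier v :=
          ⟨q', by rw [d_eq', hset, Set.ncard_singleton], hsqq'⟩
        have hq'car : q' ∈ X.carrier v :=
          ⟨q, by rw [d_comm, d_eq', hset, Set.ncard_singleton], sep_comm.mp hsqq'⟩
        exact (ih x q hq1 w v hxw hqcar).trans (ih q' y hq2 v w' hq'car hyw')
      by_cases hnxp : X.Sep v x p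
      · have hnxp' : ¬ X.Sep v x p' := by unfold Sep at hnxp hspp' ⊢; tauto
        exact key p' p hp'I hpI (by rw [sepSet_comm]; exact hsetpp') hnxp'
      · exact key p p' hpI hp'I hsetpp' hnxp
  
lemma contact_preconnected (w w' : X.Wall) : X.contactGraph.Reachable w w' := by
  obtain ⟨x, hx⟩ := carrier_nonempty (X := X) w
  obtain ⟨y, hy⟩ := carrier_nonempty (X := X) w'
  exact contact_reachable_aux (X.d x y) x y le_rfl w w' hx hy

section Action

variable {G : Type} [Group G] (A : CubeAction X G)

lemma act_inv_act (g : G) (x : X.V) : A.act g⁻¹ (A.act g x) = x := by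
  rw [← A.act_mul, inv_mul_cancel, A.act_one]

lemma wact_inv_wact (g : G) (w : X.Wall) : A.wact g⁻¹ (A.wact g w) = w := by
  rw [← A.wact_mul, inv_mul_cancel, A.wact_one]

lemma sep_equiv (g : G) (w : X.Wall) (x y : X.V) :
    X.Sep (A.wact g w) (A.act g x) (A.act g y) ↔ X.Sep w x y := by
  unfold Sep
  rw [A.side_compat, A.side_compat]

lemma carrier_equiv (g : G) {w : X.Wall} {x : X.V} (hx : x ∈ X.carrier w) :
    A.act g x ∈ X.carrier (A.wact g w) := by
  obtain ⟨y, hd, hs⟩ := hx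
  exact ⟨A.act g y, by rw [A.isom]; exact hd, (sep_equiv A g w x y).mpr hs⟩

lemma adj_equiv (g : G) {w w' : X.Wall} (h : X.contactGraph.Adj w w') :
    X.contactGraph.Adj (A.wact g w) (A.wact g w') := by
  obtain ⟨hne, x, hx1, hx2⟩ := h
  refine ⟨fun heq => hne ?_, A.act g x, carrier_equiv A g hx1, carrier_equiv A g hx2⟩
  have := congrArg (A.wact g⁻¹) heq
  rwa [wact_inv_wact, wact_inv_wact] at this

/-- the graph homomorphism of the contact graph induced by `g` -/
def contactHom (g : G) : X.contactGraph →g X.contactGraph :=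
  ⟨A.wact g, fun h => adj_equiv A g h⟩

lemma dist_wact_le (g : G) (w w' : X.Wall) :
    X.contactGraph.dist (A.wact g w) (A.wact g w') ≤ X.contactGraph.dist w w' := by
  obtain ⟨P, hP⟩ := (contact_preconnected w w').exists_walk_length_eq_dist
  calc X.contactGraph.dist (A.wact g w) (A.wact g w')
      ≤ (P.map (contactHom A g)).length := SimpleGraph.dist_le _
    _ = P.length := SimpleGraph.Walk.length_map _ _
    _ = X.contactGraph.dist w w' := hP

lemma dist_wact (g : G) (w w' : X.Wall) :
    X.contactGraph.dist (A.wact g w) (A.wact g w') = X.contactGraph.dist w w' := by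
  refine le_antisymm (dist_wact_le A g w w') ?_
  have := dist_wact_le A g⁻¹ (A.wact g w) (A.wact g w')
  rwa [wact_inv_wact, wact_inv_wact] at this

end Action

/-- a wall separating points on the carriers of the two endpoints of a walk in
the contact graph must cross the carrier of some wall appearing in the walk -/
lemma walk_crosses {w : X.Wall} {W W' : X.Wall} (P : X.contactGraph.Walk W W') :
    ∀ p p' : X.V, p ∈ X.carrier W → p' ∈ X.carrier W' → X.Sep w p p' →
    ∃ U ∈ P.support, X.Crosses w (X.carrier U) := by
  induction P with
  | nil =>
    intro p p' hp hp' hs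
    exact ⟨_, SimpleGraph.Walk.start_mem_support _, p, hp, p', hp', hs⟩
  | @cons W U W' h P ih =>
    intro p p' hp hp' hs
    obtain ⟨hne, x, hxW, hxU⟩ := h
    by_cases hpx : X.Sep w p x
    · exact ⟨W, SimpleGraph.Walk.start_mem_support _, p, hp, x, hxW, hpx⟩
    · have hxp' : X.Sep w x p' := by unfold Sep at hs hpx ⊢; tauto
      obtain ⟨U', hU', hcr⟩ := ih x p' hxU hp' hxp'
      exact ⟨U', List.mem_cons_of_mem _ hU', hcr⟩

lemma dist_le_of_mem_support {W W' U : X.Wall} (P : X.contactGraph.Walk W W')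
    (hU : U ∈ P.support) : X.contactGraph.dist W U ≤ P.length := by
  classical
  calc X.contactGraph.dist W U ≤ (P.takeUntil U hU).length := SimpleGraph.dist_le _
    _ ≤ P.length := SimpleGraph.Walk.length_takeUntil_le P hU

lemma dist_le_one_of_crosses {w U : X.Wall} (hcr : X.Crosses w (X.carrier U)) :
    X.contactGraph.dist w U ≤ 1 := by
  by_cases hwu : w = U
  · subst hwu; rw [SimpleGraph.dist_self]; omega
  · obtain ⟨x, hx1, hx2⟩ := carriers_meet_of_crosses hcr
    have : X.contactGraph.Adj w U := ⟨hwu, x, hx1, hx2⟩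
    rw [SimpleGraph.dist_eq_one_iff_adj.mpr this]

lemma contact_connected [Nonempty X.Wall] : X.contactGraph.Connected :=
  ⟨fun a b => contact_preconnected a b⟩

end CubeComplex
/-- **WPD for rank-one elements.** Let `X` be a uniformly
locally finite CAT(0) cube complex with a metrically proper `G`--action, and
let `h ∈ G` act loxodromically on the contact graph `𝒞X` (some hyperplane
orbit `⟨h⟩·w₀` is a quasigeodesic).  Then `h` is a WPD element for the
`G`--action on `𝒞X`. -/
theorem wpd_of_loxodromic (X : CubeComplex) (G : Type) [Group G]
    (A : CubeAction X G)
    (hULF : X.UniformlyLocallyFinite)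
    (hproper : ∀ (x : X.V) (R : ℕ), {g : G | X.d x (A.act g x) ≤ R}.Finite)
    (h : G)
    (hlox : ∃ (w₀ : X.Wall) (K C : ℝ), 1 ≤ K ∧ 0 ≤ C ∧
      ∀ m n : ℤ,
        (|(m : ℝ) - n|) / K - C ≤
          (X.contactGraph.dist (A.wact (h ^ m) w₀) (A.wact (h ^ n) w₀) : ℝ) ∧
        (X.contactGraph.dist (A.wact (h ^ m) w₀) (A.wact (h ^ n) w₀) : ℝ) ≤
          K * |(m : ℝ) - n| + C) :
    ∀ ε : ℕ, 1 ≤ ε → ∀ H : X.Wall, ∃ N : ℕ, 0 < N ∧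
      {g : G | X.contactGraph.dist H (A.wact g H) < ε ∧
        X.contactGraph.dist (A.wact (h ^ N) H) (A.wact (g * h ^ N) H) < ε}.Finite := by
  classical
  intro ε hε H
  obtain ⟨w₀, K, C, hK, hC, hqg⟩ := hlox
  have hKpos : (0 : ℝ) < K := lt_of_lt_of_le zero_lt_one hK
  have hconn : X.contactGraph.Connected :=
    @CubeComplex.contact_connected X ⟨H⟩
  set r : ℕ := X.contactGraph.dist H w₀ with hr
  set N : ℕ := ⌈K * (C + 2 * r + 2 * ε + 1)⌉₊ + 1 with hN
  refine ⟨N, Nat.succ_pos _, ?_⟩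
  set W2 : X.Wall := A.wact (h ^ N) H with hW2
  -- the two reference hyperplanes are far apart in the contact graph
  have hfar : 2 * ε + 1 ≤ X.contactGraph.dist H W2 := by
    have hq0 := (hqg (N : ℤ) 0).1
    rw [zpow_natCast, zpow_zero, A.wact_one] at hq0
    have habs : |((N : ℤ) : ℝ) - ((0 : ℤ) : ℝ)| = (N : ℝ) := by
      push_cast; rw [sub_zero, abs_of_nonneg (by positivity)]
    rw [habs] at hq0
    -- triangle inequalities
    have ht1 : X.contactGraph.dist (A.wact (h ^ N) w₀) w₀ ≤
        X.contactGraph.dist (A.wact (h ^ N) w₀) W2 +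
        (X.contactGraph.dist W2 H + X.contactGraph.dist H w₀) :=
      le_trans (hconn.dist_triangle (v := W2)) (by
        exact Nat.add_le_add_left (hconn.dist_triangle (v := H)) _)
    have he1 : X.contactGraph.dist (A.wact (h ^ N) w₀) W2 = r := by
      rw [hW2, CubeComplex.dist_wact, SimpleGraph.dist_comm]
    have he2 : X.contactGraph.dist W2 H = X.contactGraph.dist H W2 :=
      SimpleGraph.dist_comm
    -- numeric work over ℝ
    have hNlb : K * (C + 2 * r + 2 * ε + 1) ≤ (N : ℝ) := by
      rw [hN]
      push_cast
      have := Nat.le_ceil (K * (C + 2 * (r : ℝ) + 2 * ε + 1))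
      push_cast at this
      linarith
    have hdivlb : C + 2 * r + 2 * ε + 1 ≤ (N : ℝ) / K := by
      rw [le_div_iff₀ hKpos]
      calc (C + 2 * (r : ℝ) + 2 * ε + 1) * K = K * (C + 2 * r + 2 * ε + 1) := by ring
        _ ≤ (N : ℝ) := hNlb
    have hbig : 2 * (r : ℝ) + 2 * ε + 1 ≤
        (X.contactGraph.dist (A.wact (h ^ N) w₀) w₀ : ℝ) := by
      have : (N : ℝ) / K - C ≤ (X.contactGraph.dist (A.wact (h ^ N) w₀) w₀ : ℝ) := hq0
      linarith
    rw [he1, he2, ← hr] at ht1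
    have hcast : (X.contactGraph.dist (A.wact (h ^ N) w₀) w₀ : ℝ) ≤
        (r : ℝ) + ((X.contactGraph.dist H W2 : ℝ) + r) := by exact_mod_cast ht1
    have : 2 * (ε : ℝ) + 1 ≤ (X.contactGraph.dist H W2 : ℝ) := by linarith
    exact_mod_cast this
  -- pick reference points on the two carriers
  obtain ⟨p, hp⟩ := CubeComplex.carrier_nonempty (X := X) H
  obtain ⟨q, hq⟩ := CubeComplex.carrier_nonempty (X := X) W2
  apply Set.Finite.subset (hproper p (2 * X.d p q))
  rintro g ⟨hg1, hg2⟩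
  rw [A.wact_mul, ← hW2] at hg2
  set gp := A.act g p with hgp
  set gq := A.act g q with hgq
  have hgpc : gp ∈ X.carrier (A.wact g H) := CubeComplex.carrier_equiv A g hp
  have hgqc : gq ∈ X.carrier (A.wact g W2) := CubeComplex.carrier_equiv A g hq
  -- claim 1: a wall separating p from gp is ≤ ε from H in the contact graph
  have claim1 : ∀ w : X.Wall, X.Sep w p gp → X.contactGraph.dist H w ≤ ε := by
    intro w hw
    obtain ⟨P1, hP1⟩ :=
      (CubeComplex.contact_preconnected H (A.wact g H)).exists_walk_length_eq_dist
    obtain ⟨U, hU, hcr⟩ := CubeComplex.walk_crosses P1 p gp hp hgpc hw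
    have h1 : X.contactGraph.dist H U ≤ P1.length :=
      CubeComplex.dist_le_of_mem_support P1 hU
    have h2 : X.contactGraph.dist U w ≤ 1 := by
      rw [SimpleGraph.dist_comm]
      exact CubeComplex.dist_le_one_of_crosses hcr
    have h3 : X.contactGraph.dist H w ≤
        X.contactGraph.dist H U + X.contactGraph.dist U w := hconn.dist_triangle
    omega
  -- claim 2: a wall separating q from gq is ≤ ε from W2 in the contact graph
  have claim2 : ∀ w : X.Wall, X.Sep w q gq → X.contactGraph.dist W2 w ≤ ε := by
    intro w hw
    obtain ⟨P2, hP2⟩ :=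
      (CubeComplex.contact_preconnected W2 (A.wact g W2)).exists_walk_length_eq_dist
    obtain ⟨U, hU, hcr⟩ := CubeComplex.walk_crosses P2 q gq hq hgqc hw
    have h1 : X.contactGraph.dist W2 U ≤ P2.length :=
      CubeComplex.dist_le_of_mem_support P2 hU
    have h2 : X.contactGraph.dist U w ≤ 1 := by
      rw [SimpleGraph.dist_comm]
      exact CubeComplex.dist_le_one_of_crosses hcr
    have h3 : X.contactGraph.dist W2 w ≤
        X.contactGraph.dist W2 U + X.contactGraph.dist U w := hconn.dist_triangle
    omega
  -- no wall separates both pairs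
  have hsub : X.sepSet p gp ⊆ X.sepSet p q ∪ X.sepSet gp gq := by
    intro w hw
    by_contra hmem
    rw [Set.mem_union] at hmem
    push_neg at hmem
    obtain ⟨hm1, hm2⟩ := hmem
    have hs1 : X.Sep w p gp := hw
    have hs2 : ¬ X.Sep w p q := hm1
    have hs3 : ¬ X.Sep w gp gq := hm2
    have hs4 : X.Sep w q gq := by unfold CubeComplex.Sep at hs1 hs2 hs3 ⊢; tauto
    have hd1 := claim1 w hs1
    have hd2 := claim2 w hs4
    have htr : X.contactGraph.dist H W2 ≤
        X.contactGraph.dist H w + X.contactGraph.dist w W2 := hconn.dist_triangle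
    rw [SimpleGraph.dist_comm (u := w)] at htr
    omega
  -- conclude: g displaces p by at most 2 d(p,q)
  have hfin1 := CubeComplex.sepSet_finite (X := X) p q
  have hfin2 := CubeComplex.sepSet_finite (X := X) gp gq
  show X.d p (A.act g p) ≤ 2 * X.d p q
  calc X.d p (A.act g p) = (X.sepSet p gp).ncard := CubeComplex.d_eq' p gp
    _ ≤ (X.sepSet p q ∪ X.sepSet gp gq).ncard :=
        Set.ncard_le_ncard hsub (hfin1.union hfin2)
    _ ≤ (X.sepSet p q).ncard + (X.sepSet gp gq).ncard :=
        Set.ncard_union_le _ _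
    _ = X.d p q + X.d gp gq := by rw [← CubeComplex.d_eq', ← CubeComplex.d_eq']
    _ = 2 * X.d p q := by rw [hgp, hgq, A.isom]; ring
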